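/- Let 0 < q < 1, b > 0, n ∈ ℕ⁺, a = b q^n, f, g : [a,b] → (0,∞) positive, and p ≥ 1 or p < 0. Then (G_q(fg;a,b))^p ≤ (G_q(f²;a,b))^{p−1}·G_q(f^{2−p}g^p;a,b), where G_q(h;a,b) = b(1−q)∑_{k=0}^{n−1} h(b q^k) q^k; for 0 < p < 1 the reverse inequality holds. -/

import Mathlib

open scoped BigOperators
open Set Real

lemma convexOn_rpow_neg {p : ℝ} (hp : p < 0) :
    ConvexOn ℝ (Set.Ioi (0:ℝ)) fun x : ℝ ↦ x ^ p := by
  have hne : ∀ x : ℝ, x ∈ Set.Ioi (0:ℝ) → x ≠ 0 := fun x hx => ne_of_gt hx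
  apply convexOn_of_deriv2_nonneg (convex_Ioi 0)
  · intro x hx
    exact (Real.continuousAt_rpow_const x p (Or.inl (hne x hx))).continuousWithinAt
  · rw [interior_Ioi]
    intro x hx
    exact (Real.hasDerivAt_rpow_const (Or.inl (hne x hx))).differentiableAt.differentiableWithinAt
  · rw [interior_Ioi]
    intro x hx
    have h1 : deriv (fun y : ℝ ↦ y ^ p) =ᶠ[nhds x] fun y ↦ p * y ^ (p - 1) := by
      filter_upwards [isOpen_Ioi.mem_nhds hx] with y hy
      exact Real.deriv_rpow_const y p
    have h2 : DifferentiableAt ℝ (fun y : ℝ ↦ p * y ^ (p - 1)) x :=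
      ((Real.hasDerivAt_rpow_const (p := p - 1) (Or.inl (ne_of_gt hx))).const_mul p).differentiableAt
    exact (h2.congr_of_eventuallyEq h1).differentiableWithinAt
  · rw [interior_Ioi]
    intro x hx
    have h1 : deriv (fun y : ℝ ↦ y ^ p) =ᶠ[nhds x] fun y ↦ p * y ^ (p - 1) := by
      filter_upwards [isOpen_Ioi.mem_nhds hx] with y hy
      exact Real.deriv_rpow_const y p
    have h2 : deriv^[2] (fun y : ℝ ↦ y ^ p) x
        = deriv (fun y : ℝ ↦ p * y ^ (p - 1)) x := by
      show deriv (deriv fun y : ℝ ↦ y ^ p) x = _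
      exact h1.deriv_eq
    have h3 : deriv (fun y : ℝ ↦ p * y ^ (p - 1)) x = p * ((p - 1) * x ^ (p - 1 - 1)) :=
      ((Real.hasDerivAt_rpow_const (p := p - 1) (Or.inl (ne_of_gt hx))).const_mul p).deriv
    rw [h2, h3]
    have : (0:ℝ) < x ^ (p - 1 - 1) := Real.rpow_pos_of_pos hx _
    nlinarith [mul_pos this (mul_pos_of_neg_of_neg hp (by linarith : p - 1 < 0))]

lemma jensen_core_le {n : ℕ} {p : ℝ} (w x : ℕ → ℝ) (hn : 0 < n)
    (hw : ∀ k < n, 0 < w k) (hx : ∀ k < n, 0 < x k)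
    (hc : ConvexOn ℝ (Set.Ioi (0:ℝ)) fun t : ℝ ↦ t ^ p) :
    (∑ k ∈ Finset.range n, w k * x k) ^ p ≤
      (∑ k ∈ Finset.range n, w k) ^ (p - 1) * ∑ k ∈ Finset.range n, w k * x k ^ p := by
  set S := ∑ k ∈ Finset.range n, w k with hS
  have hSpos : 0 < S :=
    Finset.sum_pos (fun k hk => hw k (Finset.mem_range.mp hk)) ⟨0, Finset.mem_range.mpr hn⟩
  have h1 : ∑ k ∈ Finset.range n, w k / S = 1 := by
    rw [← Finset.sum_div, div_self hSpos.ne']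
  have key := hc.map_sum_le (t := Finset.range n) (w := fun k => w k / S) (p := x)
    (fun k hk => (div_pos (hw k (Finset.mem_range.mp hk)) hSpos).le) h1
    (fun k hk => hx k (Finset.mem_range.mp hk))
  simp only [smul_eq_mul] at key
  have e1 : ∑ k ∈ Finset.range n, w k / S * x k = (∑ k ∈ Finset.range n, w k * x k) / S := by
    rw [Finset.sum_div]; exact Finset.sum_congr rfl fun k _ => by ring
  have e2 : ∑ k ∈ Finset.range n, w k / S * x k ^ p
      = (∑ k ∈ Finset.range n, w k * x k ^ p) / S := by
    rw [Finset.sum_div]; exact Finset.sum_congr rfl fun k _ => by ring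
  rw [e1, e2] at key
  have hApos : 0 ≤ ∑ k ∈ Finset.range n, w k * x k :=
    Finset.sum_nonneg fun k hk =>
      (mul_pos (hw k (Finset.mem_range.mp hk)) (hx k (Finset.mem_range.mp hk))).le
  rw [Real.div_rpow hApos hSpos.le] at key
  have := mul_le_mul_of_nonneg_left key (le_of_lt (Real.rpow_pos_of_pos hSpos p))
  calc (∑ k ∈ Finset.range n, w k * x k) ^ p
      = S ^ p * ((∑ k ∈ Finset.range n, w k * x k) ^ p / S ^ p) := by
        field_simp
    _ ≤ S ^ p * ((∑ k ∈ Finset.range n, w k * x k ^ p) / S) := this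
    _ = S ^ (p - 1) * ∑ k ∈ Finset.range n, w k * x k ^ p := by
        rw [Real.rpow_sub_one hSpos.ne']; ring

lemma jensen_core_ge {n : ℕ} {p : ℝ} (w x : ℕ → ℝ) (hn : 0 < n)
    (hw : ∀ k < n, 0 < w k) (hx : ∀ k < n, 0 < x k)
    (hc : ConcaveOn ℝ (Set.Ioi (0:ℝ)) fun t : ℝ ↦ t ^ p) :
    (∑ k ∈ Finset.range n, w k) ^ (p - 1) * (∑ k ∈ Finset.range n, w k * x k ^ p) ≤
      (∑ k ∈ Finset.range n, w k * x k) ^ p := by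
  set S := ∑ k ∈ Finset.range n, w k with hS
  have hSpos : 0 < S :=
    Finset.sum_pos (fun k hk => hw k (Finset.mem_range.mp hk)) ⟨0, Finset.mem_range.mpr hn⟩
  have h1 : ∑ k ∈ Finset.range n, w k / S = 1 := by
    rw [← Finset.sum_div, div_self hSpos.ne']
  have key := hc.le_map_sum (t := Finset.range n) (w := fun k => w k / S) (p := x)
    (fun k hk => (div_pos (hw k (Finset.mem_range.mp hk)) hSpos).le) h1
    (fun k hk => hx k (Finset.mem_range.mp hk))
  simp only [smul_eq_mul] at key
  have e1 : ∑ k ∈ Finset.range n, w k / S * x k = (∑ k ∈ Finset.range n, w k * x k) / S := by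
    rw [Finset.sum_div]; exact Finset.sum_congr rfl fun k _ => by ring
  have e2 : ∑ k ∈ Finset.range n, w k / S * x k ^ p
      = (∑ k ∈ Finset.range n, w k * x k ^ p) / S := by
    rw [Finset.sum_div]; exact Finset.sum_congr rfl fun k _ => by ring
  rw [e1, e2] at key
  have hApos : 0 ≤ ∑ k ∈ Finset.range n, w k * x k :=
    Finset.sum_nonneg fun k hk =>
      (mul_pos (hw k (Finset.mem_range.mp hk)) (hx k (Finset.mem_range.mp hk))).le
  rw [Real.div_rpow hApos hSpos.le] at key
  have := mul_le_mul_of_nonneg_left key (le_of_lt (Real.rpow_pos_of_pos hSpos p))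
  calc S ^ (p - 1) * ∑ k ∈ Finset.range n, w k * x k ^ p
      = S ^ p * ((∑ k ∈ Finset.range n, w k * x k ^ p) / S) := by
        rw [Real.rpow_sub_one hSpos.ne']; ring
    _ ≤ S ^ p * ((∑ k ∈ Finset.range n, w k * x k) ^ p / S ^ p) := this
    _ = (∑ k ∈ Finset.range n, w k * x k) ^ p := by field_simp

/-- Jensen-type power inequality for the restricted q-integral:
for `p ≥ 1` or `p < 0`, `(G_q(fg))^p ≤ (G_q(f²))^{p−1}·G_q(f^{2−p}g^p)`,
with the reverse inequality for `0 < p < 1`. -/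
theorem q_jensen_power_Gq (q b p : ℝ) (n : ℕ) (f g : ℝ → ℝ) (a : ℝ)
    (hq0 : 0 < q) (hq1 : q < 1) (hb : 0 < b) (hn : 0 < n) (ha : a = b * q ^ n)
    (hfpos : ∀ k < n, 0 < f (b * q ^ k)) (hgpos : ∀ k < n, 0 < g (b * q ^ k)) :
    ((1 ≤ p ∨ p < 0) →
      (b * (1 - q) * ∑ k ∈ Finset.range n, f (b * q ^ k) * g (b * q ^ k) * q ^ k) ^ p ≤
        (b * (1 - q) * ∑ k ∈ Finset.range n, f (b * q ^ k) ^ 2 * q ^ k) ^ (p - 1) *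
          (b * (1 - q) *
            ∑ k ∈ Finset.range n, f (b * q ^ k) ^ (2 - p) * g (b * q ^ k) ^ p * q ^ k)) ∧
    (0 < p → p < 1 →
      (b * (1 - q) * ∑ k ∈ Finset.range n, f (b * q ^ k) ^ 2 * q ^ k) ^ (p - 1) *
          (b * (1 - q) *
            ∑ k ∈ Finset.range n, f (b * q ^ k) ^ (2 - p) * g (b * q ^ k) ^ p * q ^ k) ≤
        (b * (1 - q) * ∑ k ∈ Finset.range n, f (b * q ^ k) * g (b * q ^ k) * q ^ k) ^ p) := by
  have hc : 0 < b * (1 - q) := mul_pos hb (by linarith)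
  set c := b * (1 - q) with hcdef
  set w : ℕ → ℝ := fun k => f (b * q ^ k) ^ 2 * q ^ k with hwdef
  set x : ℕ → ℝ := fun k => g (b * q ^ k) / f (b * q ^ k) with hxdef
  have hw : ∀ k < n, 0 < w k := fun k hk => mul_pos (pow_pos (hfpos k hk) 2) (pow_pos hq0 k)
  have hx : ∀ k < n, 0 < x k := fun k hk => div_pos (hgpos k hk) (hfpos k hk)
  have eA : ∑ k ∈ Finset.range n, f (b * q ^ k) * g (b * q ^ k) * q ^ k
      = ∑ k ∈ Finset.range n, w k * x k := by
    refine Finset.sum_congr rfl fun k hk => ?_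
    have hF := hfpos k (Finset.mem_range.mp hk)
    simp only [hwdef, hxdef]
    field_simp
  have eC : ∑ k ∈ Finset.range n, f (b * q ^ k) ^ (2 - p) * g (b * q ^ k) ^ p * q ^ k
      = ∑ k ∈ Finset.range n, w k * x k ^ p := by
    refine Finset.sum_congr rfl fun k hk => ?_
    have hF := hfpos k (Finset.mem_range.mp hk)
    have hG := hgpos k (Finset.mem_range.mp hk)
    simp only [hwdef, hxdef]
    rw [Real.div_rpow hG.le hF.le]
    have h2 : f (b * q ^ k) ^ (2 - p) = f (b * q ^ k) ^ 2 / f (b * q ^ k) ^ p := by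
      rw [show (2 : ℝ) - p = ((2 : ℕ) : ℝ) - p by norm_num, Real.rpow_sub hF,
        Real.rpow_natCast]
    rw [h2]
    have hFp : f (b * q ^ k) ^ p ≠ 0 := (Real.rpow_pos_of_pos hF p).ne'
    field_simp
  set A := ∑ k ∈ Finset.range n, w k * x k with hAdef
  set B := ∑ k ∈ Finset.range n, w k with hBdef
  set C := ∑ k ∈ Finset.range n, w k * x k ^ p with hCdef
  have hApos : 0 < A :=
    Finset.sum_pos (fun k hk => mul_pos (hw k (Finset.mem_range.mp hk))
      (hx k (Finset.mem_range.mp hk))) ⟨0, Finset.mem_range.mpr hn⟩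
  have hBpos : 0 < B :=
    Finset.sum_pos (fun k hk => hw k (Finset.mem_range.mp hk)) ⟨0, Finset.mem_range.mpr hn⟩
  have hCpos : 0 < C :=
    Finset.sum_pos (fun k hk => mul_pos (hw k (Finset.mem_range.mp hk))
      (Real.rpow_pos_of_pos (hx k (Finset.mem_range.mp hk)) p)) ⟨0, Finset.mem_range.mpr hn⟩
  have eB : ∑ k ∈ Finset.range n, f (b * q ^ k) ^ 2 * q ^ k = B := rfl
  rw [eA, eC]
  have hcp : 0 < c ^ p := Real.rpow_pos_of_pos hc p
  constructor
  · intro hp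
    have hconv : ConvexOn ℝ (Set.Ioi (0:ℝ)) fun t : ℝ ↦ t ^ p := by
      rcases hp with hp | hp
      · exact (convexOn_rpow hp).subset Set.Ioi_subset_Ici_self (convex_Ioi 0)
      · exact convexOn_rpow_neg hp
    have key := jensen_core_le w x hn hw hx hconv
    calc (c * A) ^ p = c ^ p * A ^ p := Real.mul_rpow hc.le hApos.le
      _ ≤ c ^ p * (B ^ (p - 1) * C) := mul_le_mul_of_nonneg_left key hcp.le
      _ = (c * B) ^ (p - 1) * (c * C) := by
          rw [Real.mul_rpow hc.le hBpos.le, Real.rpow_sub_one hc.ne']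
          field_simp
  · intro hp0 hp1
    have hconc : ConcaveOn ℝ (Set.Ioi (0:ℝ)) fun t : ℝ ↦ t ^ p :=
      (Real.concaveOn_rpow hp0.le hp1.le).subset Set.Ioi_subset_Ici_self (convex_Ioi 0)
    have key := jensen_core_ge w x hn hw hx hconc
    calc (c * B) ^ (p - 1) * (c * C) = c ^ p * (B ^ (p - 1) * C) := by
          rw [Real.mul_rpow hc.le hBpos.le, Real.rpow_sub_one hc.ne']
          field_simp
      _ ≤ c ^ p * A ^ p := mul_le_mul_of_nonneg_left key hcp.le
      _ = (c * A) ^ p := (Real.mul_rpow hc.le hApos.le).symm
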